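/- arXiv:2507.18889 — 5 statements merged into one kernel-verified Lean document; each statement's English description precedes it below -/
import Mathlib

section
/- For every integer m ≥ 1, the complete graph K_{2m+1} on vertices {0,1,...,2m} can be decomposed into m edge-disjoint Hamiltonian cycles. -/
namespace HamDecomp
open SimpleGraph List

variable {V : Type*} [DecidableEq V]

def go (a : V) : (l : List V) → (b : V) → List.Chain (· ≠ ·) a (l ++ [b]) →
    (completeGraph V).Walk a b
  | [], b, h => SimpleGraph.Walk.cons (by simpa using (List.chain_cons.mp h).1) SimpleGraph.Walk.nil
  | c :: l, b, h =>
      SimpleGraph.Walk.cons (by simpa using (List.chain_cons.mp h).1)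
        (go c l b (List.chain_cons.mp h).2)

lemma support_go (a : V) (l : List V) (b : V) (h : List.Chain (· ≠ ·) a (l ++ [b])) :
    (go a l b h).support = a :: (l ++ [b]) := by
  induction l generalizing a with
  | nil => simp [go]
  | cons c l ih => simp [go, ih]; exact ih _ _

lemma edges_go (a : V) (l : List V) (b : V) (h : List.Chain (· ≠ ·) a (l ++ [b])) :
    (go a l b h).edges = List.zipWith (fun x y => s(x, y)) (a :: (l ++ [b])) (l ++ [b]) := by
  induction l generalizing a with
  | nil => simp [go]
  | cons c l ih => simp [go, ih]; exact ih _ _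

end HamDecomp

namespace HamDecomp
open SimpleGraph List

lemma chain_iff_get' {α : Type*} {R : α → α → Prop} {a : α} {l : List α} :
    List.Chain R a l ↔ (∀ h : 0 < l.length, R a (l.get ⟨0, h⟩)) ∧
      ∀ (i : ℕ) (h : i < l.length - 1), R (l.get ⟨i, by omega⟩) (l.get ⟨i+1, by omega⟩) := by
  show IsChain R (a :: l) ↔ _
  rw [List.isChain_iff_getElem]
  constructor
  · intro H
    exact ⟨fun h => by simpa using H 0 (by simp; omega),
      fun i h => by
        have := H (i+1) (by simp; omega)
        simp only [List.getElem_cons_succ, List.get_eq_getElem] at this ⊢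
        exact this⟩
  · rintro ⟨H1, H2⟩ i hi
    cases i with
    | zero => simpa using H1 (by simp at hi; omega)
    | succ i => simpa using H2 i (by simp at hi; omega)

lemma val_add_one {n : ℕ} [NeZero n] (k : Fin n) : (k + 1).val = (k.val + 1) % n := by
  rw [Fin.add_def, Fin.val_one']
  conv_rhs => rw [Nat.add_mod, Nat.mod_eq_of_lt k.isLt]

theorem ham_of_equiv {V : Type*} [DecidableEq V] {n : ℕ} [NeZero n] (hn : 3 ≤ n) (e : Fin n ≃ V) :
    ∃ w : (completeGraph V).Walk (e 0) (e 0), w.IsHamiltonianCycle ∧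
      {x | x ∈ w.edges} = {x | ∃ k : Fin n, x = s(e k, e (k + 1))} := by
  set T : List V := (List.finRange n).map (fun k => e (k + 1)) with hT
  have hTlen : T.length = n := by simp [hT]
  have hTne : T ≠ [] := by
    intro h; rw [h] at hTlen; simp at hTlen; omega
  have hTget : ∀ (i : ℕ) (h : i < T.length), T[i] = e ((⟨i, by omega⟩ : Fin n) + 1) := by
    intro i h
    simp [hT]
  have hTlast : T.getLast hTne = e 0 := by
    rw [List.getLast_eq_getElem, hTget]
    congr 1
    apply Fin.ext
    rw [val_add_one]
    have h1 : (⟨T.length - 1, by omega⟩ : Fin n).val + 1 = n := by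
      simp only []
      omega
    rw [h1, Nat.mod_self, Fin.val_zero]
  have hsplit : T.dropLast ++ [e 0] = T := by
    conv_lhs => rw [← hTlast]
    exact List.dropLast_append_getLast hTne
  have hchain : List.Chain (· ≠ ·) (e 0) (T.dropLast ++ [e 0]) := by
    rw [hsplit, chain_iff_get']
    constructor
    · intro h
      rw [List.get_eq_getElem, hTget]
      intro hc
      have h2 := congrArg Fin.val (e.injective hc.symm)
      rw [val_add_one, Fin.val_zero] at h2
      simp only [Nat.zero_add] at h2
      rw [Nat.mod_eq_of_lt (by omega)] at h2
      omega
    · intro i h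
      rw [List.get_eq_getElem, List.get_eq_getElem, hTget, hTget]
      intro hc
      have h2 := congrArg Fin.val (e.injective hc)
      rw [val_add_one, val_add_one] at h2
      simp only at h2
      have hi1 : (i + 1) % n = i + 1 := Nat.mod_eq_of_lt (by omega)
      have hi2 : (i + 1 + 1) % n = if i + 1 + 1 = n then 0 else i + 1 + 1 := by
        split
        · simp [*]
        · exact Nat.mod_eq_of_lt (by omega)
      rw [hi1, hi2] at h2
      split at h2 <;> omega
  have hsup : (go (e 0) T.dropLast (e 0) hchain).support = e 0 :: T := by
    rw [support_go, hsplit]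
  have hedges : (go (e 0) T.dropLast (e 0) hchain).edges
      = (List.finRange n).map (fun k => s(e k, e (k + 1))) := by
    rw [edges_go]
    conv_lhs => rw [hsplit]
    apply List.ext_getElem
    · simp [hTlen]
    · intro i h1 h2
      rw [List.getElem_zipWith]
      simp only [List.getElem_map, List.getElem_finRange, Fin.cast_mk]
      match i, h1, h2 with
      | 0, h1, h2 =>
        rw [List.getElem_cons_zero, hTget]
        have h0 : (0 : Fin n) = (⟨0, by omega⟩ : Fin n) := by
          apply Fin.ext; simp
        rw [← h0]
      | (j+1), h1, h2 =>
        rw [List.getElem_cons_succ, hTget, hTget]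
        have h0 : (⟨j, by simp at h2 ⊢; omega⟩ : Fin n) + 1 = (⟨j + 1, by simp at h2 ⊢; omega⟩ : Fin n) := by
          apply Fin.ext
          rw [val_add_one]
          simp only []
          have h3 : j + 1 < n := by simp [hTlen] at h1; omega
          exact Nat.mod_eq_of_lt h3
        rw [h0]
  have hone : (1 : Fin n).val = 1 := by
    rw [Fin.val_one']; exact Nat.mod_eq_of_lt (by omega)
  have hnodupT : T.Nodup := by
    rw [hT]
    refine List.Nodup.map ?_ (List.nodup_finRange n)
    intro a b hab
    exact add_right_cancel (e.injective hab)
  have hmemT : ∀ v, v ∈ T := by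
    intro v
    rw [hT]
    exact List.mem_map.mpr ⟨e.symm v - 1, List.mem_finRange _, by rw [sub_add_cancel]; simp⟩
  have hlenE : (go (e 0) T.dropLast (e 0) hchain).edges.length = n := by
    rw [hedges]; simp
  refine ⟨go (e 0) T.dropLast (e 0) hchain, ?_, ?_⟩
  · rw [SimpleGraph.Walk.isHamiltonianCycle_iff_isCycle_and_support_count_tail_eq_one]
    refine ⟨⟨⟨⟨?_⟩, ?_⟩, ?_⟩, ?_⟩
    · rw [hedges]
      refine List.Nodup.map ?_ (List.nodup_finRange n)
      intro a b hab
      rcases Sym2.eq_iff.mp hab with ⟨h1, h2⟩ | ⟨h1, h2⟩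
      · exact e.injective h1
      · exfalso
        have ha : a = b + 1 := e.injective h1
        have hb : a + 1 = b := e.injective h2
        rw [ha] at hb
        have h3 : b + (1 + 1) = b + 0 := by rw [← add_assoc, hb, add_zero]
        have h4 : ((1:Fin n) + 1).val = (0 : Fin n).val :=
          congrArg Fin.val (add_left_cancel h3)
        rw [val_add_one, hone, Fin.val_zero, Nat.mod_eq_of_lt (by omega)] at h4
        omega
    · intro hnil
      rw [hnil] at hlenE
      simp at hlenE
      omega
    · rw [hsup]
      simpa using hnodupT
    · intro a
      rw [hsup, List.tail_cons]
      exact List.count_eq_one_of_mem hnodupT (hmemT a)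
  · ext x
    simp only [Set.mem_setOf_eq, hedges, List.mem_map]
    constructor
    · rintro ⟨k, -, rfl⟩; exact ⟨k, rfl⟩
    · rintro ⟨k, rfl⟩; exact ⟨k, List.mem_finRange k, rfl⟩

end HamDecomp

namespace HamDecomp
open SimpleGraph List

section Main

variable {m : ℕ} [NeZero (2 * m)]

/-- The zigzag sequence 0, 1, -1, 2, -2, ..., m in `ZMod (2m)`. -/
def s2 (k : Fin (2 * m)) : ZMod (2 * m) :=
  if k.val % 2 = 0 then -((k.val / 2 : ℕ) : ZMod (2 * m))
  else (((k.val + 1) / 2 : ℕ) : ZMod (2 * m))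

lemma two_m_pos : 0 < 2 * m := Nat.pos_of_ne_zero (NeZero.ne _)

lemma s2_val (k : Fin (2 * m)) :
    (s2 k).val = if k.val % 2 = 0 then (if k.val = 0 then 0 else 2 * m - k.val / 2)
      else (k.val + 1) / 2 := by
  have hk := k.isLt
  have hmpos : 0 < 2 * m := two_m_pos
  unfold s2
  by_cases he : k.val % 2 = 0
  · rw [if_pos he, if_pos he]
    by_cases h0 : k.val = 0
    · have hd : k.val / 2 = 0 := by omega
      rw [if_pos h0, hd]
      simp
    · rw [if_neg h0, ZMod.neg_val]
      have hne : ((k.val / 2 : ℕ) : ZMod (2 * m)) ≠ 0 := by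
        intro h
        have := (ZMod.natCast_eq_zero_iff _ _).mp h
        have := Nat.le_of_dvd (by omega) this
        omega
      rw [if_neg hne, ZMod.val_cast_of_lt (by omega)]
  · rw [if_neg he, if_neg he, ZMod.val_cast_of_lt (by omega)]

lemma s2_injective : Function.Injective (s2 (m := m)) := by
  intro k k' h
  have h2 := congrArg ZMod.val h
  rw [s2_val, s2_val] at h2
  have := k.isLt
  have := k'.isLt
  apply Fin.ext
  split_ifs at h2 <;> omega

/-- Embedding of `ZMod (2m)` into `Fin (2m+1)`. -/
def iota (x : ZMod (2 * m)) : Fin (2 * m + 1) := ⟨x.val, by have := ZMod.val_lt x; omega⟩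

lemma iota_ne_last (x : ZMod (2 * m)) : iota x ≠ Fin.last (2 * m) := by
  have := ZMod.val_lt x
  intro h
  have := congrArg Fin.val h
  simp [iota, Fin.last] at this
  omega

lemma iota_injective : Function.Injective (iota (m := m)) := by
  intro a b h
  have := congrArg Fin.val h
  simp [iota] at this
  exact ZMod.val_injective _ this

/-- The `i`-th Walecki Hamiltonian ordering of `Fin (2m+1)`. -/
def wal (i : Fin m) : Fin (2 * m + 1) → Fin (2 * m + 1) :=
  fun k => Fin.cases (Fin.last (2 * m)) (fun j => iota ((i.val : ZMod (2 * m)) + s2 j)) k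

lemma wal_injective (i : Fin m) : Function.Injective (wal i) := by
  intro a b h
  rcases Fin.eq_zero_or_eq_succ a with rfl | ⟨ja, rfl⟩ <;>
    rcases Fin.eq_zero_or_eq_succ b with rfl | ⟨jb, rfl⟩
  · rfl
  · simp only [wal, Fin.cases_zero, Fin.cases_succ] at h
    exact absurd h.symm (iota_ne_last _)
  · simp only [wal, Fin.cases_zero, Fin.cases_succ] at h
    exact absurd h (iota_ne_last _)
  · simp only [wal, Fin.cases_succ] at h
    have h2 := add_left_cancel (iota_injective h)
    rw [s2_injective h2]

noncomputable def eqv (i : Fin m) : Fin (2 * m + 1) ≃ Fin (2 * m + 1) :=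
  Equiv.ofBijective _ (Finite.injective_iff_bijective.mp (wal_injective i))

lemma eqv_apply (i : Fin m) (k : Fin (2 * m + 1)) : eqv i k = wal i k := rfl

/-- The `k`-th edge of the `i`-th Walecki cycle. -/
def pairAt (i : Fin m) (k : Fin (2 * m + 1)) : Sym2 (Fin (2 * m + 1)) :=
  s(wal i k, wal i (k + 1))

lemma s2_eq_even (j : Fin (2 * m)) (u : ℕ) (hu : j.val = 2 * u) :
    s2 j = -((u : ℕ) : ZMod (2 * m)) := by
  have h1 : j.val % 2 = 0 := by omega
  have h2 : j.val / 2 = u := by omega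
  rw [s2]
  simp [h1, h2]

lemma s2_eq_odd (j : Fin (2 * m)) (u : ℕ) (hu : j.val = 2 * u + 1) :
    s2 j = ((u + 1 : ℕ) : ZMod (2 * m)) := by
  have h1 : ¬(j.val % 2 = 0) := by omega
  have h2 : (j.val + 1) / 2 = u + 1 := by omega
  rw [s2, if_neg h1, h2]

lemma fin_add_one_eq (j : Fin (2 * m)) (h : j.val + 1 < 2 * m) :
    j + 1 = (⟨j.val + 1, h⟩ : Fin (2 * m)) := by
  apply Fin.ext
  rw [val_add_one]
  exact Nat.mod_eq_of_lt h

lemma hm_pos : 1 ≤ m := by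
  have := two_m_pos (m := m)
  omega

lemma pairAt_zero (i : Fin m) :
    pairAt i 0 = s(Fin.last (2 * m), iota ((i.val : ℕ) : ZMod (2 * m))) := by
  have hm := hm_pos (m := m)
  have h01 : (0 : Fin (2 * m + 1)) + 1 = Fin.succ (⟨0, by omega⟩ : Fin (2 * m)) := by
    apply Fin.ext
    rw [val_add_one]
    simp [Nat.mod_eq_of_lt]
  rw [pairAt, h01]
  show s(wal i 0, wal i _) = _
  rw [wal, wal]
  simp only [Fin.cases_zero, Fin.cases_succ]
  rw [s2_eq_even _ 0 (by simp)]
  norm_num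

lemma pairAt_last (i : Fin m) :
    pairAt i (Fin.last (2 * m))
      = s(iota (((i.val : ℕ) : ZMod (2 * m)) + ((m : ℕ) : ZMod (2 * m))), Fin.last (2 * m)) := by
  have hm := hm_pos (m := m)
  have hlast : Fin.last (2 * m) = Fin.succ (⟨2 * m - 1, by omega⟩ : Fin (2 * m)) := by
    apply Fin.ext
    simp [Fin.last]
    omega
  have hwrap : Fin.last (2 * m) + 1 = (0 : Fin (2 * m + 1)) := by
    apply Fin.ext
    rw [val_add_one]
    simp [Fin.last]
  rw [pairAt, hwrap]
  conv_lhs => rw [hlast]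
  rw [wal, wal]
  simp only [Fin.cases_zero, Fin.cases_succ]
  rw [s2_eq_odd _ (m - 1) (by simp; omega)]
  have : m - 1 + 1 = m := by omega
  rw [this]

lemma pairAt_mid (i : Fin m) (j : Fin (2 * m)) (hj : j.val + 1 < 2 * m) :
    pairAt i j.succ
      = s(iota (((i.val : ℕ) : ZMod (2 * m)) + s2 j),
          iota (((i.val : ℕ) : ZMod (2 * m)) + s2 (j + 1))) := by
  have hsucc : j.succ + 1 = Fin.succ (j + 1) := by
    apply Fin.ext
    rw [val_add_one]
    have h1 : j.succ.val = j.val + 1 := rfl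
    have h2 : (j + 1).succ.val = (j + 1).val + 1 := rfl
    rw [h1, h2, val_add_one, Nat.mod_eq_of_lt hj, Nat.mod_eq_of_lt (by omega)]
  rw [pairAt, hsucc, wal, wal]
  simp only [Fin.cases_succ]

lemma pairAt_cases (i : Fin m) (k : Fin (2 * m + 1)) :
    pairAt i k = s(Fin.last (2 * m), iota ((i.val : ℕ) : ZMod (2 * m)))
    ∨ pairAt i k = s(iota (((i.val : ℕ) : ZMod (2 * m)) + ((m : ℕ) : ZMod (2 * m))),
        Fin.last (2 * m))
    ∨ ∃ j : Fin (2 * m), j.val + 1 < 2 * m ∧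
        pairAt i k = s(iota (((i.val : ℕ) : ZMod (2 * m)) + s2 j),
          iota (((i.val : ℕ) : ZMod (2 * m)) + s2 (j + 1))) := by
  rcases Fin.eq_zero_or_eq_succ k with rfl | ⟨j, rfl⟩
  · exact Or.inl (pairAt_zero i)
  · by_cases hj : j.val + 1 < 2 * m
    · exact Or.inr (Or.inr ⟨j, hj, pairAt_mid i j hj⟩)
    · have hlast : j.succ = Fin.last (2 * m) := by
        apply Fin.ext
        have := j.isLt
        show j.val + 1 = 2 * m
        omega
      rw [hlast]
      exact Or.inr (Or.inl (pairAt_last i))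

lemma s2_sum (j : Fin (2 * m)) (hj : j.val + 1 < 2 * m) :
    s2 j + s2 (j + 1) = 0 ∨ s2 j + s2 (j + 1) = 1 := by
  rw [fin_add_one_eq j hj]
  by_cases he : j.val % 2 = 0
  · right
    obtain ⟨u, hu⟩ : ∃ u, j.val = 2 * u := ⟨j.val / 2, by omega⟩
    rw [s2_eq_even j u hu, s2_eq_odd _ u (by simp [hu])]
    push_cast
    ring
  · left
    obtain ⟨u, hu⟩ : ∃ u, j.val = 2 * u + 1 := ⟨j.val / 2, by omega⟩
    rw [s2_eq_odd j u hu, s2_eq_even _ (u + 1) (by simp [hu]; omega)]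
    push_cast
    ring


lemma vertex_cases (v : Fin (2 * m + 1)) : v = Fin.last (2 * m) ∨ ∃ x, v = iota x := by
  by_cases h : v.val = 2 * m
  · exact Or.inl (Fin.ext h)
  · right
    refine ⟨((v.val : ℕ) : ZMod (2 * m)), Fin.ext ?_⟩
    show v.val = (((v.val : ℕ) : ZMod (2 * m))).val
    rw [ZMod.val_cast_of_lt (by have := v.isLt; omega)]

lemma cover_inf (x : ZMod (2 * m)) :
    ∃ (i : Fin m) (k : Fin (2 * m + 1)), s(Fin.last (2 * m), iota x) = pairAt i k := by
  have hm := hm_pos (m := m)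
  have hxlt := ZMod.val_lt x
  by_cases h : x.val < m
  · refine ⟨⟨x.val, h⟩, 0, ?_⟩
    rw [pairAt_zero]
    have : ((((⟨x.val, h⟩ : Fin m)).val : ℕ) : ZMod (2 * m)) = x := ZMod.natCast_rightInverse x
    rw [this]
  · refine ⟨⟨x.val - m, by omega⟩, Fin.last (2 * m), ?_⟩
    rw [pairAt_last]
    have hx : ((((⟨x.val - m, by omega⟩ : Fin m)).val : ℕ) : ZMod (2 * m)) + ((m : ℕ) : ZMod (2 * m)) = x := by
      show ((x.val - m : ℕ) : ZMod (2 * m)) + ((m : ℕ) : ZMod (2 * m)) = x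
      rw [← Nat.cast_add]
      have h2 : x.val - m + m = x.val := by omega
      rw [h2]
      exact ZMod.natCast_rightInverse x
    rw [hx, Sym2.eq_swap]

lemma cover_int (x y : ZMod (2 * m)) (hxy : x ≠ y) :
    ∃ (i : Fin m) (k : Fin (2 * m + 1)), s(iota x, iota y) = pairAt i k := by
  have hm := hm_pos (m := m)
  have htlt := ZMod.val_lt (x + y)
  obtain ⟨i, ε, hε, hsum⟩ :
      ∃ (i : Fin m) (ε : ZMod (2 * m)), (ε = 0 ∨ ε = 1) ∧
        x + y = 2 * ((i.val : ℕ) : ZMod (2 * m)) + ε := by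
    have key : (((x + y).val : ℕ) : ZMod (2 * m)) = x + y := ZMod.natCast_rightInverse _
    by_cases hp : (x + y).val % 2 = 0
    · refine ⟨⟨(x + y).val / 2, by omega⟩, 0, Or.inl rfl, ?_⟩
      show x + y = 2 * (((x + y).val / 2 : ℕ) : ZMod (2 * m)) + 0
      have h2 : (x + y).val = 2 * ((x + y).val / 2) := by omega
      have h3 := congrArg (fun a : ℕ => ((a : ℕ) : ZMod (2 * m))) h2
      push_cast at h3
      linear_combination h3 - key
    · refine ⟨⟨(x + y).val / 2, by omega⟩, 1, Or.inr rfl, ?_⟩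
      show x + y = 2 * (((x + y).val / 2 : ℕ) : ZMod (2 * m)) + 1
      have h2 : (x + y).val = 2 * ((x + y).val / 2) + 1 := by omega
      have h3 := congrArg (fun a : ℕ => ((a : ℕ) : ZMod (2 * m))) h2
      push_cast at h3
      linear_combination h3 - key
  set iz : ZMod (2 * m) := ((i.val : ℕ) : ZMod (2 * m)) with hiz
  have hx' : x = iz + (x - iz) := by ring
  set c : ZMod (2 * m) := x - iz with hc
  have hy' : y = iz + (ε - c) := by rw [hc]; linear_combination hsum
  have hcv := ZMod.val_lt c
  have hcc : ((c.val : ℕ) : ZMod (2 * m)) = c := ZMod.natCast_rightInverse c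
  rcases hε with rfl | rfl
  · -- ε = 0
    have hc0 : c ≠ 0 := by
      intro h0
      rw [hc] at h0
      apply hxy
      have : x = iz := by linear_combination h0
      rw [this, hy', hc, this]
      ring
    have hcm : c.val ≠ m := by
      intro h0
      apply hxy
      have hcm2 : c + c = 0 := by
        rw [← hcc, h0, ← Nat.cast_add]
        have : m + m = 2 * m := by omega
        rw [this]
        exact ZMod.natCast_self _
      rw [hx', hy']
      have : (0 : ZMod (2 * m)) - c = c := by linear_combination -hcm2
      rw [this]
    have hc1 : 1 ≤ c.val := by
      rcases Nat.eq_zero_or_pos c.val with h0 | h0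
      · exact absurd ((ZMod.val_eq_zero _).mp h0) hc0
      · omega
    set u : ℕ := if c.val < m then c.val else 2 * m - c.val with hu
    have hu1 : 1 ≤ u ∧ u ≤ m - 1 := by
      rw [hu]; split <;> omega
    have hcu : c = ((u : ℕ) : ZMod (2 * m)) ∨ c = -((u : ℕ) : ZMod (2 * m)) := by
      rw [hu]
      split
      · exact Or.inl hcc.symm
      · right
        have : ((2 * m - c.val : ℕ) : ZMod (2 * m)) + ((c.val : ℕ) : ZMod (2 * m)) = 0 := by
          rw [← Nat.cast_add]
          have h2 : 2 * m - c.val + c.val = 2 * m := by omega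
          rw [h2]
          exact ZMod.natCast_self _
        linear_combination this - hcc
    have hjlt : 2 * u - 1 < 2 * m := by omega
    refine ⟨i, Fin.succ ⟨2 * u - 1, hjlt⟩, ?_⟩
    rw [pairAt_mid i _ (by simp; omega)]
    rw [s2_eq_odd _ (u - 1) (by simp; omega), fin_add_one_eq _ (by simp; omega)]
    rw [s2_eq_even _ u (by simp; omega)]
    have huu : u - 1 + 1 = u := by omega
    rw [huu, ← hiz]
    rw [Sym2.eq_iff]
    rcases hcu with hcu | hcu
    · left
      constructor
      · rw [hx', hcu]
      · rw [hy', hcu]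
        congr 1
        ring
    · right
      constructor
      · rw [hx', hcu]
      · rw [hy', hcu]
        congr 1
        ring
  · -- ε = 1
    by_cases hrange : 1 ≤ c.val ∧ c.val ≤ m
    · set u : ℕ := c.val - 1 with hu
      have hule : u ≤ m - 1 := by omega
      have hcu : c = ((u + 1 : ℕ) : ZMod (2 * m)) := by
        rw [← hcc]
        congr 1
        omega
      have hjlt : 2 * u < 2 * m := by omega
      refine ⟨i, Fin.succ ⟨2 * u, hjlt⟩, ?_⟩
      rw [pairAt_mid i _ (by simp; omega)]
      rw [s2_eq_even _ u (by simp), fin_add_one_eq _ (by simp; omega)]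
      rw [s2_eq_odd _ u (by simp), ← hiz]
      rw [Sym2.eq_iff]
      right
      constructor
      · rw [hx', hcu]
      · rw [hy', hcu]
        congr 1
        push_cast
        ring
    · set u : ℕ := if c.val = 0 then 0 else 2 * m - c.val with hu
      have hule : u ≤ m - 1 := by rw [hu]; split <;> omega
      have hcu : c = -((u : ℕ) : ZMod (2 * m)) := by
        rw [hu]
        split
        · rename_i h0
          rw [← hcc, h0]
          simp
        · have : ((2 * m - c.val : ℕ) : ZMod (2 * m)) + ((c.val : ℕ) : ZMod (2 * m)) = 0 := by
            rw [← Nat.cast_add]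
            have h2 : 2 * m - c.val + c.val = 2 * m := by omega
            rw [h2]
            exact ZMod.natCast_self _
          linear_combination this - hcc
      have hjlt : 2 * u < 2 * m := by omega
      refine ⟨i, Fin.succ ⟨2 * u, hjlt⟩, ?_⟩
      rw [pairAt_mid i _ (by simp; omega)]
      rw [s2_eq_even _ u (by simp), fin_add_one_eq _ (by simp; omega)]
      rw [s2_eq_odd _ u (by simp), ← hiz]
      rw [Sym2.eq_iff]
      left
      constructor
      · rw [hx', hcu]
      · rw [hy', hcu]
        congr 1
        push_cast
        ring

lemma inf_forward (i : Fin m) (x : ZMod (2 * m)) (k : Fin (2 * m + 1))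
    (h : s(Fin.last (2 * m), iota x) = pairAt i k) :
    x = ((i.val : ℕ) : ZMod (2 * m)) ∨
      x = ((i.val : ℕ) : ZMod (2 * m)) + ((m : ℕ) : ZMod (2 * m)) := by
  rcases pairAt_cases i k with hc | hc | ⟨j, hj, hc⟩ <;> rw [hc] at h
  · rcases Sym2.eq_iff.mp h with ⟨h1, h2⟩ | ⟨h1, h2⟩
    · exact Or.inl (iota_injective h2)
    · exact absurd h1.symm (iota_ne_last _)
  · rcases Sym2.eq_iff.mp h with ⟨h1, h2⟩ | ⟨h1, h2⟩
    · exact absurd h1.symm (iota_ne_last _)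
    · exact Or.inr (iota_injective h2)
  · rcases Sym2.eq_iff.mp h with ⟨h1, h2⟩ | ⟨h1, h2⟩
    · exact absurd h1.symm (iota_ne_last _)
    · exact absurd h1.symm (iota_ne_last _)

lemma int_forward (i : Fin m) (x y : ZMod (2 * m)) (k : Fin (2 * m + 1))
    (h : s(iota x, iota y) = pairAt i k) :
    ∃ ε : ZMod (2 * m), (ε = 0 ∨ ε = 1) ∧
      x + y = 2 * ((i.val : ℕ) : ZMod (2 * m)) + ε := by
  rcases pairAt_cases i k with hc | hc | ⟨j, hj, hc⟩ <;> rw [hc] at h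
  · rcases Sym2.eq_iff.mp h with ⟨h1, h2⟩ | ⟨h1, h2⟩
    · exact absurd h1 (iota_ne_last _)
    · exact absurd h2 (iota_ne_last _)
  · rcases Sym2.eq_iff.mp h with ⟨h1, h2⟩ | ⟨h1, h2⟩
    · exact absurd h2 (iota_ne_last _)
    · exact absurd h1 (iota_ne_last _)
  · refine ⟨s2 j + s2 (j + 1), s2_sum j hj, ?_⟩
    rcases Sym2.eq_iff.mp h with ⟨h1, h2⟩ | ⟨h1, h2⟩
    · have e1 := iota_injective h1
      have e2 := iota_injective h2
      rw [e1, e2]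
      ring
    · have e1 := iota_injective h1
      have e2 := iota_injective h2
      rw [e1, e2]
      ring

lemma index_eq_of_sums (i i' : Fin m) (ε ε' : ZMod (2 * m)) (hε : ε = 0 ∨ ε = 1)
    (hε' : ε' = 0 ∨ ε' = 1)
    (h : 2 * ((i.val : ℕ) : ZMod (2 * m)) + ε = 2 * ((i'.val : ℕ) : ZMod (2 * m)) + ε') :
    i = i' := by
  have hm := hm_pos (m := m)
  set φ : ZMod (2 * m) →+* ZMod 2 := ZMod.castHom (dvd_mul_right 2 m) (ZMod 2) with hφ
  have h2 : (2 : ZMod (2 * m)) * (((i.val : ℕ) : ZMod (2 * m)) - ((i'.val : ℕ) : ZMod (2 * m)))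
      = ε' - ε := by linear_combination h
  have hzero : φ (ε' - ε) = 0 := by
    rw [← h2, map_mul, map_ofNat]
    have : (2 : ZMod 2) = 0 := by decide
    rw [this, zero_mul]
  have hee : ε = ε' := by
    rcases hε with rfl | rfl <;> rcases hε' with rfl | rfl
    · rfl
    · exfalso
      rw [sub_zero, map_one] at hzero
      exact absurd hzero (by decide)
    · exfalso
      rw [zero_sub, map_neg, map_one] at hzero
      have : (1 : ZMod 2) = 0 := by linear_combination -hzero
      exact absurd this (by decide)
    · rfl
  rw [hee] at h
  have h3 : ((2 * i.val : ℕ) : ZMod (2 * m)) = ((2 * i'.val : ℕ) : ZMod (2 * m)) := by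
    push_cast
    linear_combination h
  have h4 := congrArg ZMod.val h3
  rw [ZMod.val_cast_of_lt (by have := i.isLt; omega),
    ZMod.val_cast_of_lt (by have := i'.isLt; omega)] at h4
  apply Fin.ext
  omega

end Main

end HamDecomp


open HamDecomp


/-- For every integer `m ≥ 1`, the complete graph `K_{2m+1}` on vertices `{0,...,2m}`
can be decomposed into `m` edge-disjoint Hamiltonian cycles: there exist `m` Hamiltonian
cycles whose edge sets are pairwise disjoint and whose union is the whole edge set. -/
theorem complete_graph_odd_hamiltonian_decomposition (m : ℕ) (hm : 1 ≤ m) :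
    ∃ E : Fin m → Set (Sym2 (Fin (2 * m + 1))),
      (∀ i : Fin m, ∃ (v : Fin (2 * m + 1))
          (w : (SimpleGraph.completeGraph (Fin (2 * m + 1))).Walk v v),
          w.IsHamiltonianCycle ∧ E i = {e | e ∈ w.edges}) ∧
      (∀ i j : Fin m, i ≠ j → Disjoint (E i) (E j)) ∧
      (⋃ i : Fin m, E i) = (SimpleGraph.completeGraph (Fin (2 * m + 1))).edgeSet := by
  haveI : NeZero (2 * m) := ⟨by omega⟩
  refine ⟨fun i => {x | ∃ k : Fin (2 * m + 1), x = pairAt i k}, ?_, ?_, ?_⟩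
  · intro i
    obtain ⟨w, hw1, hw2⟩ := ham_of_equiv (by omega) (eqv i)
    refine ⟨eqv i 0, w, hw1, Eq.trans ?_ hw2.symm⟩
    rfl
  · intro i j hij
    rw [Set.disjoint_left]
    rintro z ⟨k, rfl⟩ ⟨k', hz'⟩
    apply hij
    rcases pairAt_cases i k with hc | hc | ⟨jj, hjj, hc⟩
    · -- shape s(last, iota ↑i)
      have hfwd := inf_forward j _ k' (hc.symm.trans hz')
      rcases hfwd with h1 | h1
      · have h2 := congrArg ZMod.val h1
        rw [ZMod.val_cast_of_lt (by have := i.isLt; omega),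
          ZMod.val_cast_of_lt (by have := j.isLt; omega)] at h2
        exact Fin.ext h2
      · exfalso
        rw [← Nat.cast_add] at h1
        have h2 := congrArg ZMod.val h1
        rw [ZMod.val_cast_of_lt (by have := i.isLt; omega),
          ZMod.val_cast_of_lt (by have := j.isLt; omega)] at h2
        have := i.isLt
        omega
    · -- shape s(iota (↑i + ↑m), last)
      have hswap : s(Fin.last (2 * m),
          iota (((i.val : ℕ) : ZMod (2 * m)) + ((m : ℕ) : ZMod (2 * m)))) = pairAt j k' :=
        Sym2.eq_swap.trans (hc.symm.trans hz')
      have hfwd := inf_forward j _ k' hswap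
      rcases hfwd with h1 | h1
      · exfalso
        rw [← Nat.cast_add] at h1
        have h2 := congrArg ZMod.val h1
        rw [ZMod.val_cast_of_lt (by have := i.isLt; omega),
          ZMod.val_cast_of_lt (by have := j.isLt; omega)] at h2
        have := j.isLt
        omega
      · have h1' := add_right_cancel h1
        have h2 := congrArg ZMod.val h1'
        rw [ZMod.val_cast_of_lt (by have := i.isLt; omega),
          ZMod.val_cast_of_lt (by have := j.isLt; omega)] at h2
        exact Fin.ext h2
    · -- interior shape
      have hfwd := int_forward j _ _ k' (hc.symm.trans hz')
      obtain ⟨ε, hε, hsum⟩ := hfwd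
      have hsi : (((i.val : ℕ) : ZMod (2 * m)) + s2 jj)
          + (((i.val : ℕ) : ZMod (2 * m)) + s2 (jj + 1))
          = 2 * ((i.val : ℕ) : ZMod (2 * m)) + (s2 jj + s2 (jj + 1)) := by ring
      exact index_eq_of_sums i j _ ε (s2_sum jj hjj) hε (hsi.symm.trans hsum)
  · apply Set.eq_of_subset_of_subset
    · rw [Set.iUnion_subset_iff]
      intro i
      rintro z ⟨k, rfl⟩
      show s(wal i k, wal i (k + 1)) ∈ (SimpleGraph.completeGraph (Fin (2 * m + 1))).edgeSet
      rw [SimpleGraph.mem_edgeSet]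
      show wal i k ≠ wal i (k + 1)
      intro hEq
      have h2 := congrArg Fin.val (wal_injective i hEq)
      rw [val_add_one] at h2
      have := k.isLt
      by_cases h3 : k.val + 1 < 2 * m + 1
      · rw [Nat.mod_eq_of_lt h3] at h2
        omega
      · have h4 : k.val + 1 = 2 * m + 1 := by omega
        rw [h4, Nat.mod_self] at h2
        omega
    · rintro z hz
      induction z using Sym2.ind with
      | _ a b =>
        rw [SimpleGraph.mem_edgeSet] at hz
        have hab : a ≠ b := hz
        rcases vertex_cases a with rfl | ⟨xa, rfl⟩ <;> rcases vertex_cases b with rfl | ⟨xb, rfl⟩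
        · exact absurd rfl hab
        · obtain ⟨i, k, hik⟩ := cover_inf xb
          exact Set.mem_iUnion.mpr ⟨i, ⟨k, hik⟩⟩
        · obtain ⟨i, k, hik⟩ := cover_inf xa
          exact Set.mem_iUnion.mpr ⟨i, ⟨k, Sym2.eq_swap.trans hik⟩⟩
        · have hxy : xa ≠ xb := fun h => hab (by rw [h])
          obtain ⟨i, k, hik⟩ := cover_int xa xb hxy
          exact Set.mem_iUnion.mpr ⟨i, ⟨k, hik⟩⟩
end

section
/- The m zigzag Hamiltonian paths on Z/2mZ (for i = 0,...,m-1), each extended to a cycle through an additional vertex v = 2m joined to the path's two endpoints, form m edge-disjoint Hamiltonian cycles whose union is all edges of K_{2m+1}. -/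
/-- The `k`-th term of the zigzag sequence `(i, i-1, i+1, i-2, i+2, ...)` modulo `2m`,
as a natural number in `{0, ..., 2m-1}`. -/
def zigzagVal (m i k : ℕ) : ℕ :=
  (((if k % 2 = 0 then (i : ℤ) + k / 2 else (i : ℤ) - (k + 1) / 2) : ℤ) : ZMod (2 * m)).val

/-- The `k`-th vertex (cyclically) of the cycle `C_i`: the extra vertex `2m` followed by
the zigzag Hamiltonian path `(i, i-1, i+1, ..., i+m-1, i-m) mod 2m`. -/
def zigzagCycleVertex (m i k : ℕ) : ℕ :=
  if k % (2 * m + 1) = 0 then 2 * m else zigzagVal m i (k % (2 * m + 1) - 1)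

/-- The edge set of the cycle `C_i` (zigzag path `P_i` closed up through vertex `2m`). -/
def zigzagCycleEdges (m i : ℕ) : Set (Sym2 ℕ) :=
  {e | ∃ k < 2 * m + 1, e = s(zigzagCycleVertex m i k, zigzagCycleVertex m i (k + 1))}

def zzW (m i k : ℕ) : ZMod (2 * m) :=
  (((if k % 2 = 0 then (i : ℤ) + k / 2 else (i : ℤ) - (k + 1) / 2) : ℤ) : ZMod (2 * m))

lemma zz_zigzagVal_eq (m i k : ℕ) : zigzagVal m i k = (zzW m i k).val := rfl

lemma zz_W_even (m i t : ℕ) : zzW m i (2 * t) = ((i + t : ℤ) : ZMod (2 * m)) := by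
  unfold zzW
  rw [if_pos (by omega)]
  congr 1
  push_cast
  omega

lemma zz_W_odd (m i t : ℕ) : zzW m i (2 * t + 1) = ((i - (t + 1) : ℤ) : ZMod (2 * m)) := by
  unfold zzW
  rw [if_neg (by omega)]
  congr 1
  push_cast
  omega

lemma zz_W_inj {m i k k' : ℕ} (hk : k < 2 * m) (hk' : k' < 2 * m)
    (h : zzW m i k = zzW m i k') : k = k' := by
  unfold zzW at h
  rw [ZMod.intCast_eq_intCast_iff] at h
  have hd := h.dvd
  have h0 := Int.eq_zero_of_abs_lt_dvd hd (by split_ifs <;> rw [abs_lt] <;> omega)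
  split_ifs at h0 <;> omega

lemma zz_W_zero (m i : ℕ) : zzW m i 0 = (i : ZMod (2 * m)) := by
  have := zz_W_even m i 0
  simp only [Nat.mul_zero] at this
  rw [this]; push_cast; ring

lemma zz_W_last {m : ℕ} (hm : 1 ≤ m) (i : ℕ) :
    zzW m i (2 * m - 1) = (i : ZMod (2 * m)) + m := by
  have h1 : 2 * m - 1 = 2 * (m - 1) + 1 := by omega
  rw [h1, zz_W_odd]
  have h2 : ((((i : ℤ) - ((m - 1 : ℕ) + 1)) : ℤ) : ZMod (2 * m)) = ((i + m : ℤ) : ZMod (2 * m)) := by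
    rw [ZMod.intCast_eq_intCast_iff]
    apply Int.modEq_iff_dvd.mpr
    exact ⟨1, by push_cast; omega⟩
  rw [h2]; push_cast; ring

lemma zz_vertex_zero (m i : ℕ) : zigzagCycleVertex m i 0 = 2 * m := by
  simp [zigzagCycleVertex]

lemma zz_vertex_top (m i : ℕ) : zigzagCycleVertex m i (2 * m + 1) = 2 * m := by
  simp [zigzagCycleVertex]

lemma zz_vertex_pos (m i k : ℕ) (h1 : 1 ≤ k) (h2 : k ≤ 2 * m) :
    zigzagCycleVertex m i k = (zzW m i (k - 1)).val := by
  unfold zigzagCycleVertex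
  rw [Nat.mod_eq_of_lt (by omega), if_neg (by omega)]
  rfl

lemma zz_mem_internal {m i : ℕ} {k : ℕ} (h1 : 1 ≤ k) (h2 : k ≤ 2 * m - 1) (hm : 1 ≤ m) :
    s((zzW m i (k - 1)).val, (zzW m i k).val) ∈ zigzagCycleEdges m i := by
  refine ⟨k, by omega, ?_⟩
  rw [zz_vertex_pos m i k h1 (by omega), zz_vertex_pos m i (k + 1) (by omega) (by omega)]
  simp



lemma zz_natCast_val_cast {m : ℕ} [NeZero (2 * m)] (d : ZMod (2 * m)) :
    ((d.val : ℕ) : ZMod (2 * m)) = d := by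
  rw [ZMod.natCast_val, ZMod.cast_id]

lemma zz_internal_mem_odd {m i : ℕ} (hm : 1 ≤ m) (a b : ZMod (2 * m))
    (ht : (a - (i : ZMod (2 * m))).val < m) (hab : a + b + 1 = 2 * (i : ZMod (2 * m))) :
    s(a.val, b.val) ∈ zigzagCycleEdges m i := by
  haveI : NeZero (2 * m) := ⟨by omega⟩
  set t := (a - (i : ZMod (2 * m))).val with htdef
  have hta : ((t : ℕ) : ZMod (2 * m)) = a - i := zz_natCast_val_cast _
  have ha : a = zzW m i (2 * t) := by rw [zz_W_even]; push_cast; linear_combination -hta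
  have hb : b = zzW m i (2 * t + 1) := by
    rw [zz_W_odd]; push_cast; linear_combination hab + hta
  have hk : (2 * t + 1) - 1 = 2 * t := rfl
  rw [ha, hb, ← hk]
  exact zz_mem_internal (by omega) (by omega) hm

lemma zz_internal_mem_even {m i : ℕ} (hm : 1 ≤ m) (a b : ZMod (2 * m))
    (h1 : 1 ≤ (a - (i : ZMod (2 * m))).val) (h2 : (a - (i : ZMod (2 * m))).val < m)
    (hab : a + b = 2 * (i : ZMod (2 * m))) :
    s(a.val, b.val) ∈ zigzagCycleEdges m i := by
  haveI : NeZero (2 * m) := ⟨by omega⟩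
  set s := (a - (i : ZMod (2 * m))).val with hsdef
  have hta : ((s : ℕ) : ZMod (2 * m)) = a - i := zz_natCast_val_cast _
  have ha : a = zzW m i (2 * (s - 1) + 2) := by
    have : 2 * (s - 1) + 2 = 2 * s := by omega
    rw [this, zz_W_even]
    have h3 : ((s : ℕ) : ZMod (2 * m)) = ((s : ℤ) : ZMod (2 * m)) := by push_cast; rfl
    push_cast
    linear_combination -hta
  have hb : b = zzW m i (2 * (s - 1) + 1) := by
    rw [zz_W_odd]
    push_cast [Nat.cast_sub h1]
    linear_combination hab + hta
  have hk : (2 * (s - 1) + 2) - 1 = 2 * (s - 1) + 1 := rfl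
  rw [Sym2.eq_swap, hb, ha, ← hk]
  exact zz_mem_internal (by omega) (by omega) hm

lemma zz_mem_edges {m : ℕ} (hm : 1 ≤ m) (i : ℕ) (e : Sym2 ℕ) :
    e ∈ zigzagCycleEdges m i ↔
      e = s(2 * m, ((i : ZMod (2 * m))).val) ∨
      e = s(2 * m, ((i : ZMod (2 * m)) + m).val) ∨
      ∃ a b : ZMod (2 * m), a ≠ b ∧
        (a + b = 2 * (i : ZMod (2 * m)) ∨ a + b + 1 = 2 * (i : ZMod (2 * m))) ∧
        e = s(a.val, b.val) := by
  haveI : NeZero (2 * m) := ⟨by omega⟩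
  constructor
  · rintro ⟨k, hk, rfl⟩
    rcases Nat.eq_zero_or_pos k with rfl | hk1
    · left
      rw [zz_vertex_zero, zz_vertex_pos m i 1 le_rfl (by omega)]
      have h0 : (1 : ℕ) - 1 = 0 := rfl
      rw [h0, zz_W_zero]
    · rcases Nat.lt_or_ge k (2 * m) with hk2 | hk2
      · -- internal edge
        right; right
        refine ⟨zzW m i (k - 1), zzW m i k, ?_, ?_, ?_⟩
        · intro h; exact absurd (zz_W_inj (by omega) (by omega) h) (by omega)
        · rcases Nat.even_or_odd k with ⟨t, ht⟩ | ⟨t, ht⟩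
          · left
            have e1 : k - 1 = 2 * (t - 1) + 1 := by omega
            have e2 : k = 2 * t := by omega
            rw [e1, e2, zz_W_odd, zz_W_even]
            push_cast [Nat.cast_sub (show 1 ≤ t by omega)]
            ring
          · right
            have e1 : k - 1 = 2 * t := by omega
            have e2 : k = 2 * t + 1 := by omega
            rw [e1, e2, zz_W_even, zz_W_odd]
            push_cast
            ring
        · rw [zz_vertex_pos m i k (by omega) (by omega),
            zz_vertex_pos m i (k + 1) (by omega) (by omega)]
          simp
      · -- k = 2m : last edge
        have hk2m : k = 2 * m := by omega
        subst hk2m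
        right; left
        rw [zz_vertex_pos m i (2 * m) (by omega) le_rfl]
        have h3 : 2 * m + 1 = 2 * m + 1 := rfl
        rw [zz_vertex_top, zz_W_last hm, Sym2.eq_swap]
  · intro h
    rcases h with rfl | rfl | ⟨a, b, hab, hsum, rfl⟩
    · refine ⟨0, by omega, ?_⟩
      rw [zz_vertex_zero, zz_vertex_pos m i 1 le_rfl (by omega)]
      have h0 : (1 : ℕ) - 1 = 0 := rfl
      rw [h0, zz_W_zero]
    · refine ⟨2 * m, by omega, ?_⟩
      rw [zz_vertex_pos m i (2 * m) (by omega) le_rfl, zz_vertex_top, zz_W_last hm, Sym2.eq_swap]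
    · rcases hsum with hsum | hsum
      · -- even-type: a + b = 2i
        have hd0 : a - (i : ZMod (2 * m)) ≠ 0 := by
          intro h
          apply hab
          have ha : a = (i : ZMod (2 * m)) := by linear_combination h
          have hb : b = (i : ZMod (2 * m)) := by linear_combination hsum - h
          rw [ha, hb]
        have hdm : (a - (i : ZMod (2 * m))).val ≠ m := by
          intro h
          apply hab
          have h2 : a - (i : ZMod (2 * m)) = ((m : ℕ) : ZMod (2 * m)) := by
            rw [← zz_natCast_val_cast (a - (i : ZMod (2 * m))), h]
          have h2m : ((2 * m : ℕ) : ZMod (2 * m)) = 0 := ZMod.natCast_self _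
          push_cast at h2m
          linear_combination -hsum + 2 * h2 + h2m
        have hdlt := ZMod.val_lt (a - (i : ZMod (2 * m)))
        have hne0 : (a - (i : ZMod (2 * m))).val ≠ 0 := by
          intro h
          exact hd0 (by rw [← zz_natCast_val_cast (a - (i : ZMod (2 * m))), h]; push_cast; rfl)
        rcases Nat.lt_or_ge (a - (i : ZMod (2 * m))).val m with h | h
        · exact zz_internal_mem_even hm a b (by omega) h hsum
        · rw [Sym2.eq_swap]
          have hbd : b - (i : ZMod (2 * m)) = -(a - (i : ZMod (2 * m))) := by
            linear_combination hsum
          have hbv : (b - (i : ZMod (2 * m))).val = 2 * m - (a - (i : ZMod (2 * m))).val := by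
            rw [hbd, ZMod.neg_val, if_neg hd0]
          exact zz_internal_mem_even hm b a (by omega) (by omega)
            (by linear_combination hsum)
      · -- odd-type: a + b + 1 = 2i
        rcases Nat.lt_or_ge (a - (i : ZMod (2 * m))).val m with h | h
        · exact zz_internal_mem_odd hm a b h hsum
        · rw [Sym2.eq_swap]
          have hdlt := ZMod.val_lt (a - (i : ZMod (2 * m)))
          have hbd : b - (i : ZMod (2 * m)) =
              ((2 * m - 1 - (a - (i : ZMod (2 * m))).val : ℕ) : ZMod (2 * m)) := by
            have h2 : (2 * m - 1 - (a - (i : ZMod (2 * m))).val) + ((a - (i : ZMod (2 * m))).val + 1)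
                = 2 * m := by omega
            have h3 := congrArg (Nat.cast : ℕ → ZMod (2 * m)) h2
            push_cast [zz_natCast_val_cast] at h3
            have h2m : ((2 * m : ℕ) : ZMod (2 * m)) = 0 := ZMod.natCast_self _
            push_cast at h2m
            linear_combination hsum - h3 - h2m
          have hbv : (b - (i : ZMod (2 * m))).val < m := by
            rw [hbd, ZMod.val_cast_of_lt (by omega)]
            omega
          exact zz_internal_mem_odd hm b a hbv (by linear_combination hsum)



lemma zz_cast_inj_of_lt {m x y : ℕ} (hx : x < 2 * m) (hy : y < 2 * m)
    (h : ((x : ℕ) : ZMod (2 * m)) = y) : x = y := by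
  rw [← ZMod.val_cast_of_lt hx, ← ZMod.val_cast_of_lt hy, h]

lemma zz_val_add_m {m i : ℕ} (hm : 1 ≤ m) (hi : i < m) :
    ((i : ZMod (2 * m)) + m).val = i + m := by
  have h1 : (i : ZMod (2 * m)) + m = ((i + m : ℕ) : ZMod (2 * m)) := by push_cast; ring
  rw [h1, ZMod.val_cast_of_lt (by omega)]


/-- The `m` zigzag Hamiltonian cycles `C_0, ..., C_{m-1}` on `{0,...,2m}` are Hamiltonian
(each visits all `2m+1` vertices), pairwise edge-disjoint, and their union is the edge set
of the complete graph `K_{2m+1}` on `{0,...,2m}`. -/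
theorem zigzag_cycles_decompose_complete_graph (m : ℕ) (hm : 1 ≤ m) :
    (∀ i < m, Function.Injective (fun k : Fin (2 * m + 1) => zigzagCycleVertex m i k)) ∧
    (∀ i < m, ∀ j < m, i ≠ j →
      Disjoint (zigzagCycleEdges m i) (zigzagCycleEdges m j)) ∧
    (⋃ i ∈ Finset.range m, zigzagCycleEdges m i) =
      {e : Sym2 ℕ | ∃ a b : ℕ, a ≠ b ∧ a ≤ 2 * m ∧ b ≤ 2 * m ∧ e = s(a, b)} := by
  haveI : NeZero (2 * m) := ⟨by omega⟩
  refine ⟨?_, ?_, ?_⟩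
  · -- injectivity
    intro i _ k k' h
    simp only at h
    have hk := k.isLt
    have hk' := k'.isLt
    rcases Nat.eq_zero_or_pos (k : ℕ) with h0 | h0 <;>
      rcases Nat.eq_zero_or_pos (k' : ℕ) with h0' | h0'
    · exact Fin.ext (by omega)
    · rw [h0, zz_vertex_zero, zz_vertex_pos m i k' h0' (by omega)] at h
      have := ZMod.val_lt (zzW m i ((k' : ℕ) - 1))
      omega
    · rw [h0', zz_vertex_zero, zz_vertex_pos m i k h0 (by omega)] at h
      have := ZMod.val_lt (zzW m i ((k : ℕ) - 1))
      omega
    · rw [zz_vertex_pos m i k h0 (by omega), zz_vertex_pos m i k' h0' (by omega)] at h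
      have := zz_W_inj (m := m) (i := i) (k := (k : ℕ) - 1) (k' := (k' : ℕ) - 1)
        (by omega) (by omega) (ZMod.val_injective _ h)
      exact Fin.ext (by omega)
  · -- disjointness
    intro i hi j hj hij
    rw [Set.disjoint_left]
    intro e hei hej
    rw [zz_mem_edges hm] at hei hej
    have vi : ((i : ZMod (2 * m))).val = i := ZMod.val_cast_of_lt (by omega)
    have vj : ((j : ZMod (2 * m))).val = j := ZMod.val_cast_of_lt (by omega)
    have vim := zz_val_add_m hm hi
    have vjm := zz_val_add_m hm hj
    have key : ∀ a b : ZMod (2 * m),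
        (a + b = 2 * (i : ZMod (2 * m)) ∨ a + b + 1 = 2 * (i : ZMod (2 * m))) →
        (a + b = 2 * (j : ZMod (2 * m)) ∨ a + b + 1 = 2 * (j : ZMod (2 * m))) → False := by
      intro a b h1 h2
      rcases h1 with h1 | h1 <;> rcases h2 with h2 | h2
      · have : ((2 * i : ℕ) : ZMod (2 * m)) = ((2 * j : ℕ) : ZMod (2 * m)) := by
          push_cast; linear_combination h2 - h1
        have := zz_cast_inj_of_lt (by omega) (by omega) this
        omega
      · have : ((2 * i + 1 : ℕ) : ZMod (2 * m)) = ((2 * j : ℕ) : ZMod (2 * m)) := by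
          push_cast; linear_combination h2 - h1
        have := zz_cast_inj_of_lt (by omega) (by omega) this
        omega
      · have : ((2 * i : ℕ) : ZMod (2 * m)) = ((2 * j + 1 : ℕ) : ZMod (2 * m)) := by
          push_cast; linear_combination h2 - h1
        have := zz_cast_inj_of_lt (by omega) (by omega) this
        omega
      · have : ((2 * i : ℕ) : ZMod (2 * m)) = ((2 * j : ℕ) : ZMod (2 * m)) := by
          push_cast; linear_combination h2 - h1
        have := zz_cast_inj_of_lt (by omega) (by omega) this
        omega
    rcases hei with h1 | h1 | ⟨a, b, hab, hs1, h1⟩ <;>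
      rcases hej with h2 | h2 | ⟨a', b', hab', hs2, h2⟩ <;> rw [h1] at h2
    · rw [Sym2.eq_iff] at h2; omega
    · rw [Sym2.eq_iff] at h2; omega
    · rw [Sym2.eq_iff] at h2
      have := ZMod.val_lt a'; have := ZMod.val_lt b'
      omega
    · rw [Sym2.eq_iff] at h2; omega
    · rw [Sym2.eq_iff] at h2; omega
    · rw [Sym2.eq_iff] at h2
      have := ZMod.val_lt a'; have := ZMod.val_lt b'
      omega
    · rw [Sym2.eq_iff] at h2
      have := ZMod.val_lt a; have := ZMod.val_lt b
      omega
    · rw [Sym2.eq_iff] at h2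
      have := ZMod.val_lt a; have := ZMod.val_lt b
      omega
    · rw [Sym2.eq_iff] at h2
      have hsum : a' + b' = a + b := by
        rcases h2 with ⟨ha, hb⟩ | ⟨ha, hb⟩
        · rw [ZMod.val_injective _ ha, ZMod.val_injective _ hb]
        · rw [ZMod.val_injective _ ha, ZMod.val_injective _ hb, add_comm]
      rw [hsum] at hs2
      exact key a b hs1 hs2
  · -- union
    ext e
    simp only [Set.mem_iUnion, Finset.mem_range, Set.mem_setOf_eq, exists_prop]
    constructor
    · rintro ⟨i, hi, he⟩
      rw [zz_mem_edges hm] at he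
      rcases he with rfl | rfl | ⟨a, b, hab, _, rfl⟩
      · refine ⟨2 * m, ((i : ZMod (2 * m))).val, ?_, le_rfl, ?_, rfl⟩
        · have := ZMod.val_lt (i : ZMod (2 * m)); omega
        · exact le_of_lt (ZMod.val_lt _)
      · refine ⟨2 * m, ((i : ZMod (2 * m)) + (m : ZMod (2 * m))).val, ?_, le_rfl, ?_, rfl⟩
        · have := ZMod.val_lt ((i : ZMod (2 * m)) + (m : ZMod (2 * m))); omega
        · exact le_of_lt (ZMod.val_lt _)
      · exact ⟨a.val, b.val, fun h => hab (ZMod.val_injective _ h),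
          le_of_lt (ZMod.val_lt _), le_of_lt (ZMod.val_lt _), rfl⟩
    · rintro ⟨a, b, hab, ha, hb, rfl⟩
      -- helper for hub edges
      have hub : ∀ x : ℕ, x < 2 * m → ∃ i < m, s(2 * m, x) ∈ zigzagCycleEdges m i := by
        intro x hx
        rcases Nat.lt_or_ge x m with h | h
        · refine ⟨x, h, ?_⟩
          rw [zz_mem_edges hm]
          left
          rw [ZMod.val_cast_of_lt (by omega)]
        · refine ⟨x - m, by omega, ?_⟩
          rw [zz_mem_edges hm]
          right; left
          rw [zz_val_add_m hm (by omega), Nat.sub_add_cancel h]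
      rcases Nat.eq_or_lt_of_le ha with ha2 | ha2
      · -- a = 2m
        have hb2 : b < 2 * m := by omega
        obtain ⟨i, hi, hmem⟩ := hub b hb2
        exact ⟨i, hi, by rw [ha2]; exact hmem⟩
      · rcases Nat.eq_or_lt_of_le hb with hb2 | hb2
        · have ha3 : a < 2 * m := by omega
          obtain ⟨i, hi, hmem⟩ := hub a ha3
          exact ⟨i, hi, by rw [hb2, Sym2.eq_swap]; exact hmem⟩
        · -- both < 2m : internal edge
          have hcast : ((a : ZMod (2 * m))).val = a := ZMod.val_cast_of_lt ha2
          have hcast' : ((b : ZMod (2 * m))).val = b := ZMod.val_cast_of_lt hb2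
          have hABne : (a : ZMod (2 * m)) ≠ (b : ZMod (2 * m)) := by
            intro h; exact hab (zz_cast_inj_of_lt ha2 hb2 h)
          have hmodcast : ((a + b : ℕ) : ZMod (2 * m)) = (((a + b) % (2 * m) : ℕ) : ZMod (2 * m)) :=
            (ZMod.natCast_mod _ _).symm
          set s := (a + b) % (2 * m) with hsdef
          have hslt : s < 2 * m := Nat.mod_lt _ (by omega)
          rcases Nat.even_or_odd s with ⟨t, hst⟩ | ⟨t, hst⟩
          · refine ⟨t, by omega, ?_⟩
            rw [zz_mem_edges hm]
            right; right
            refine ⟨a, b, hABne, Or.inl ?_, by rw [hcast, hcast']⟩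
            have : ((s : ℕ) : ZMod (2 * m)) = ((2 * t : ℕ) : ZMod (2 * m)) := by
              congr 1; omega
            push_cast at hmodcast this ⊢
            linear_combination hmodcast + this
          · -- s odd
            rcases Nat.eq_or_lt_of_le (show s ≤ 2 * m - 1 by omega) with hs1 | hs1
            · refine ⟨0, by omega, ?_⟩
              rw [zz_mem_edges hm]
              right; right
              refine ⟨a, b, hABne, Or.inr ?_, by rw [hcast, hcast']⟩
              have h2m : ((2 * m : ℕ) : ZMod (2 * m)) = 0 := ZMod.natCast_self _
              have hs2 : ((s + 1 : ℕ) : ZMod (2 * m)) = 0 := by rw [show s + 1 = 2 * m by omega, h2m]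
              push_cast at hmodcast hs2 ⊢
              linear_combination hmodcast + hs2
            · refine ⟨t + 1, by omega, ?_⟩
              rw [zz_mem_edges hm]
              right; right
              refine ⟨a, b, hABne, Or.inr ?_, by rw [hcast, hcast']⟩
              have : ((s + 1 : ℕ) : ZMod (2 * m)) = ((2 * (t + 1) : ℕ) : ZMod (2 * m)) := by
                congr 1; omega
              push_cast at hmodcast this ⊢
              linear_combination hmodcast + this
end

section
/- In the zigzag path construction, distinct indices i ≠ j in {0,...,m-1} yield edge-disjoint paths on Z/2mZ: no edge {a, b} of Z/2mZ appears in both P_i and P_j. -/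
/-- The `k`-th term of the zigzag sequence for offset `i`, as an element of `ZMod (2m)`:
`i + k/2` for even `k` and `i - (k+1)/2` for odd `k`. -/
def zigzagTerm (m i k : ℕ) : ZMod (2 * m) :=
  ((if k % 2 = 0 then (i : ℤ) + k / 2 else (i : ℤ) - (k + 1) / 2 : ℤ) : ZMod (2 * m))

/-- The edge set of the zigzag Hamiltonian path `P_i` on `ZMod (2m)`: the unordered pairs
of consecutive terms of the zigzag sequence. -/
def zigzagPathEdges (m i : ℕ) : Set (Sym2 (ZMod (2 * m))) :=
  {e | ∃ k < 2 * m - 1, e = s(zigzagTerm m i k, zigzagTerm m i (k + 1))}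

lemma zigzag_sum (m i k : ℕ) :
    zigzagTerm m i k + zigzagTerm m i (k + 1) =
      (((2 * i + (k % 2 : ℕ) - 1 : ℤ)) : ZMod (2 * m)) := by
  simp only [zigzagTerm, ← Int.cast_add]
  congr 1
  rcases Nat.mod_two_eq_zero_or_one k with h | h <;>
    · have h' : (k + 1) % 2 = 1 - k % 2 := by omega
      simp only [h, h']
      push_cast
      omega

/-- Distinct indices `i ≠ j` in `{0, ..., m-1}` yield edge-disjoint zigzag paths on
`ZMod (2m)`: no edge appears in both `P_i` and `P_j`. -/
theorem zigzag_paths_edge_disjoint (m i j : ℕ) (hm : 1 ≤ m)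
    (hi : i < m) (hj : j < m) (hij : i ≠ j) :
    Disjoint (zigzagPathEdges m i) (zigzagPathEdges m j) := by
  rw [Set.disjoint_left]
  rintro e ⟨k, hk, rfl⟩ ⟨l, hl, hel⟩
  have hsum : zigzagTerm m i k + zigzagTerm m i (k + 1) =
      zigzagTerm m j l + zigzagTerm m j (l + 1) := by
    rw [Sym2.eq_iff] at hel
    rcases hel with ⟨h1, h2⟩ | ⟨h1, h2⟩ <;> rw [h1, h2] <;> ring
  rw [zigzag_sum, zigzag_sum, ZMod.intCast_eq_intCast_iff'] at hsum
  have hdvd : ((2 * m : ℕ) : ℤ) ∣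
      ((2 * i + (k % 2 : ℕ) - 1) - (2 * j + (l % 2 : ℕ) - 1)) :=
    Int.ModEq.dvd hsum.symm
  rcases Nat.mod_two_eq_zero_or_one k with hk2 | hk2 <;>
    rcases Nat.mod_two_eq_zero_or_one l with hl2 | hl2 <;>
      rw [hk2, hl2] at hdvd
  · -- both even: 2m ∣ 2(i - j)
    have h2 : (2 : ℤ) * m ∣ 2 * ((i : ℤ) - j) := by
      push_cast at hdvd ⊢
      convert hdvd using 1
      ring
    have hm' : (m : ℤ) ∣ ((i : ℤ) - j) := (mul_dvd_mul_iff_left two_ne_zero).mp h2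
    have : ((i : ℤ) - j) = 0 := Int.eq_zero_of_abs_lt_dvd hm' (by
      rw [abs_sub_lt_iff]; constructor <;> push_cast <;> omega)
    omega
  · -- k even, l odd : 2m ∣ odd, contradiction
    have h2m : (2 : ℤ) ∣ ((2 * m : ℕ) : ℤ) := by push_cast; exact Dvd.intro _ rfl
    have h2 := h2m.trans hdvd
    push_cast at h2
    omega
  · have h2m : (2 : ℤ) ∣ ((2 * m : ℕ) : ℤ) := by push_cast; exact Dvd.intro _ rfl
    have h2 := h2m.trans hdvd
    push_cast at h2
    omega
  · have h2 : (2 : ℤ) * m ∣ 2 * ((i : ℤ) - j) := by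
      push_cast at hdvd ⊢
      convert hdvd using 1
      ring
    have hm' : (m : ℤ) ∣ ((i : ℤ) - j) := (mul_dvd_mul_iff_left two_ne_zero).mp h2
    have : ((i : ℤ) - j) = 0 := Int.eq_zero_of_abs_lt_dvd hm' (by
      rw [abs_sub_lt_iff]; constructor <;> push_cast <;> omega)
    omega
end

section
/- Worst-case availability with 2a faults: in an n×n grid of nodes where a faulted node forces removing its entire row or its entire column, if 2a faulted nodes lie in pairwise distinct rows and pairwise distinct columns, then the maximum surviving rectangular subgrid (obtained by deleting a set of rows and columns covering all faults) has size exactly (n−a)×(n−a), i.e., (n−a)^2 nodes. -/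
/-- Worst-case availability with `2a` faults: in an `n × n` grid, if `2a` faulted nodes
lie in pairwise distinct rows and pairwise distinct columns (with `2a ≤ n`), then the
maximum surviving rectangular subgrid size, over all deletions of a set of rows and
columns covering all faults, equals `(n - a)^2`. -/
theorem worst_case_availability (n a : ℕ) (ha : 2 * a ≤ n)
    (F : Finset (Fin n × Fin n)) (hcard : F.card = 2 * a)
    (hrows : ∀ f ∈ F, ∀ g ∈ F, f ≠ g → f.1 ≠ g.1)
    (hcols : ∀ f ∈ F, ∀ g ∈ F, f ≠ g → f.2 ≠ g.2) :
    IsGreatest {s : ℕ | ∃ R C : Finset (Fin n),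
        (∀ f ∈ F, f.1 ∈ R ∨ f.2 ∈ C) ∧ s = (n - R.card) * (n - C.card)}
      ((n - a) ^ 2) := by
  classical
  constructor
  · -- membership
    obtain ⟨S, hS, hScard⟩ := Finset.exists_subset_card_eq (s := F) (n := a) (by omega)
    refine ⟨S.image Prod.fst, (F \ S).image Prod.snd, ?_, ?_⟩
    · intro f hf
      by_cases h : f ∈ S
      · exact Or.inl (Finset.mem_image_of_mem _ h)
      · exact Or.inr (Finset.mem_image_of_mem _ (Finset.mem_sdiff.mpr ⟨hf, h⟩))
    · have h1 : (S.image Prod.fst).card = a := by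
        rw [Finset.card_image_of_injOn, hScard]
        intro f hf g hg hfg
        by_contra hne
        exact hrows f (hS hf) g (hS hg) hne hfg
      have h2 : ((F \ S).image Prod.snd).card = a := by
        rw [Finset.card_image_of_injOn]
        · rw [Finset.card_sdiff_of_subset hS, hcard, hScard]; omega
        · intro f hf g hg hfg
          by_contra hne
          exact hcols f (Finset.mem_sdiff.mp hf).1 g (Finset.mem_sdiff.mp hg).1 hne hfg
      rw [h1, h2, sq]
  · rintro s ⟨R, C, hcov, rfl⟩
    have hF1 : (F.filter (fun f => f.1 ∈ R)).card ≤ R.card := by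
      calc (F.filter (fun f => f.1 ∈ R)).card
          = ((F.filter (fun f => f.1 ∈ R)).image Prod.fst).card := by
            rw [Finset.card_image_of_injOn]
            intro f hf g hg hfg
            by_contra hne
            exact hrows f (Finset.mem_filter.mp hf).1 g (Finset.mem_filter.mp hg).1 hne hfg
        _ ≤ R.card := Finset.card_le_card (by
            intro x hx
            obtain ⟨f, hf, rfl⟩ := Finset.mem_image.mp hx
            exact (Finset.mem_filter.mp hf).2)
    have hF2 : (F.filter (fun f => ¬ f.1 ∈ R)).card ≤ C.card := by
      calc (F.filter (fun f => ¬ f.1 ∈ R)).card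
          = ((F.filter (fun f => ¬ f.1 ∈ R)).image Prod.snd).card := by
            rw [Finset.card_image_of_injOn]
            intro f hf g hg hfg
            by_contra hne
            exact hcols f (Finset.mem_filter.mp hf).1 g (Finset.mem_filter.mp hg).1 hne hfg
        _ ≤ C.card := Finset.card_le_card (by
            intro x hx
            obtain ⟨f, hf, rfl⟩ := Finset.mem_image.mp hx
            have hf' := Finset.mem_filter.mp hf
            exact (hcov f hf'.1).resolve_left hf'.2)
    have hsum := Finset.card_filter_add_card_filter_not
      (s := F) (p := fun f => f.1 ∈ R)
    have key : 2 * a ≤ R.card + C.card := by omega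
    set r := R.card
    set c := C.card
    have h1 : (n - r) + (n - c) ≤ 2 * (n - a) := by omega
    nlinarith [two_mul_le_add_sq (n - r) (n - c), h1]
end

section
/- If all faulted cells of an n×n grid are 'isolated' (no two share a row or column), with f faults total, then the maximum surviving rectangle after deleting rows/columns covering all faults is (n − ⌈f/2⌉)·(n − ⌊f/2⌋). -/
lemma prod_le_half_prod (x y s : ℕ) (h : x + y ≤ s) :
    x * y ≤ (s / 2) * ((s + 1) / 2) := by
  wlog hxy : x ≤ y generalizing x y
  · rw [mul_comm]; exact this y x (by omega) (by omega)
  have hx : x ≤ s / 2 := by omega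
  have hb : s / 2 ≤ (s + 1) / 2 := by omega
  have hsum : s / 2 + (s + 1) / 2 = s := by omega
  zify at *
  nlinarith [mul_nonneg (show (0:ℤ) ≤ (s:ℤ)/2 - x by omega)
    (show (0:ℤ) ≤ ((s:ℤ)+1)/2 - x by omega)]

/-- If all `f` faulted cells of an `n × n` grid are isolated (pairwise distinct rows and
columns, `f ≤ n`), then the maximum surviving rectangle after deleting rows and columns
covering all faults is `(n - ⌈f/2⌉) * (n - ⌊f/2⌋)`. -/
theorem isolated_faults_max_allocation (n f : ℕ) (hf : f ≤ n)
    (F : Finset (Fin n × Fin n)) (hcard : F.card = f)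
    (hrows : ∀ p ∈ F, ∀ q ∈ F, p ≠ q → p.1 ≠ q.1)
    (hcols : ∀ p ∈ F, ∀ q ∈ F, p ≠ q → p.2 ≠ q.2) :
    IsGreatest {s : ℕ | ∃ R C : Finset (Fin n),
        (∀ p ∈ F, p.1 ∈ R ∨ p.2 ∈ C) ∧ s = (n - R.card) * (n - C.card)}
      ((n - (f + 1) / 2) * (n - f / 2)) := by
  constructor
  · -- membership: split F into two halves
    obtain ⟨F1, hF1sub, hF1card⟩ := Finset.exists_subset_card_eq
      (show (f + 1) / 2 ≤ F.card by omega)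
    set F2 := F \ F1 with hF2
    have hF2card : F2.card = f / 2 := by
      rw [hF2, Finset.card_sdiff_of_subset hF1sub]; omega
    refine ⟨F1.image Prod.fst, F2.image Prod.snd, ?_, ?_⟩
    · intro p hp
      by_cases h1 : p ∈ F1
      · exact Or.inl (Finset.mem_image_of_mem _ h1)
      · exact Or.inr (Finset.mem_image_of_mem _ (Finset.mem_sdiff.2 ⟨hp, h1⟩))
    · have h1 : (F1.image Prod.fst).card = (f + 1) / 2 := by
        rw [Finset.card_image_of_injOn, hF1card]
        intro p hp q hq hpq
        by_contra hne
        exact hrows p (hF1sub hp) q (hF1sub hq) hne hpq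
      have h2 : (F2.image Prod.snd).card = f / 2 := by
        rw [Finset.card_image_of_injOn, hF2card]
        intro p hp q hq hpq
        have hp' := (Finset.mem_sdiff.1 hp).1
        have hq' := (Finset.mem_sdiff.1 hq).1
        by_contra hne
        exact hcols p hp' q hq' hne hpq
      rw [h1, h2]
  · -- upper bound
    rintro s ⟨R, C, hcov, rfl⟩
    have hRn : R.card ≤ n := by
      simpa using R.card_le_card (Finset.subset_univ R)
    have hCn : C.card ≤ n := by
      simpa using C.card_le_card (Finset.subset_univ C)
    have hfRC : f ≤ R.card + C.card := by
      have : F.card ≤ (R.disjSum C).card := by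
        apply Finset.card_le_card_of_injOn
          (fun p => if p.1 ∈ R then Sum.inl p.1 else Sum.inr p.2)
        · intro p hp
          by_cases h : p.1 ∈ R
          · simp [h, Finset.inl_mem_disjSum]
          · have := hcov p hp
            simp [h, Finset.inr_mem_disjSum]
            tauto
        · intro p hp q hq heq
          by_cases h1 : p.1 ∈ R <;> by_cases h2 : q.1 ∈ R <;>
            simp [h1, h2] at heq
          · by_contra hne
            exact hrows p hp q hq hne heq
          · by_contra hne
            exact hcols p hp q hq hne heq
      rw [Finset.card_disjSum] at this
      omega
    have key := prod_le_half_prod (n - R.card) (n - C.card) (2 * n - f) (by omega)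
    have e1 : (2 * n - f) / 2 = n - (f + 1) / 2 := by omega
    have e2 : (2 * n - f + 1) / 2 = n - f / 2 := by omega
    rw [e1, e2] at key
    exact key
end
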